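/- Suppose 0 ≤ z ≤ c₀ ν-a.e. on the support of Q and the marginal density ḡ(y) = ∫ g(y,z) ν(dz) satisfies ḡ ≤ c₁. Then there is a constant Γ₃ (depending only on c₀ and c₁) such that for all s,t ≥ 0 with 0 < |s−t| < 1, the L²(Q) norm satisfies ‖h_t − h_s‖_{L²(Q)} ≤ Γ₃ |t−s| √(log(2/|t−s|)). -/

import Mathlib

open Set MeasureTheory
open scoped ENNReal NNReal

/-- `h_t(y,z) = 2z(√y − √((y−t)₊))`. -/
noncomputable def hker (t y z : ℝ) : ℝ :=
  2 * z * (Real.sqrt y - Real.sqrt (max (y - t) 0))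

lemma phi_sq_le_tail {s t y : ℝ} (hst : s < t) (hy : t + (t - s) ≤ y) :
    (Real.sqrt (max (y - s) 0) - Real.sqrt (max (y - t) 0)) ^ 2
      ≤ (t - s) ^ 2 / (2 * (y - s)) := by
  have hδ0 : 0 < t - s := sub_pos.2 hst
  have hyt0 : 0 < y - t := by linarith
  have hys : 0 < y - s := by linarith
  rw [max_eq_left hys.le, max_eq_left hyt0.le]
  have hsq : 0 < Real.sqrt (y - t) := Real.sqrt_pos.2 hyt0
  have hsq2 : Real.sqrt (y - t) ^ 2 = y - t := Real.sq_sqrt hyt0.le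
  have key : Real.sqrt (y - s) ≤ Real.sqrt (y - t) + (t - s) / (2 * Real.sqrt (y - t)) := by
    rw [Real.sqrt_le_iff]
    constructor
    · positivity
    · have h2 : Real.sqrt (y - t) * ((t - s) / (2 * Real.sqrt (y - t))) = (t - s) / 2 := by
        field_simp
      nlinarith [sq_nonneg ((t - s) / (2 * Real.sqrt (y - t)))]
  have hφ0 : 0 ≤ Real.sqrt (y - s) - Real.sqrt (y - t) :=
    sub_nonneg.2 (Real.sqrt_le_sqrt (by linarith))
  have h1 : (Real.sqrt (y - s) - Real.sqrt (y - t)) ^ 2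
      ≤ ((t - s) / (2 * Real.sqrt (y - t))) ^ 2 :=
    pow_le_pow_left₀ hφ0 (by linarith) 2
  have h2 : ((t - s) / (2 * Real.sqrt (y - t))) ^ 2 = (t - s) ^ 2 / (4 * (y - t)) := by
    rw [div_pow, mul_pow, hsq2]; norm_num
  have h3 : (t - s) ^ 2 / (4 * (y - t)) ≤ (t - s) ^ 2 / (2 * (y - s)) := by
    apply div_le_div_of_nonneg_left (sq_nonneg _) (by linarith)
    linarith
  linarith

lemma arith_bound (C₀ C₁ δ L : ℝ) (h0 : 0 ≤ C₀) (h1 : 0 ≤ C₁) (hδ : 0 ≤ δ)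
    (hL : (0.69 : ℝ) ≤ L) :
    4 * C₀ ^ 2 * (C₁ * (4 * δ ^ 2 + δ ^ 2 / 2 * L) + δ ^ 2 / 2)
      ≤ (2 * (C₀ + 1) * Real.sqrt (7 * C₁ + 1)) ^ 2 * (δ ^ 2 * L) := by
  have hs : Real.sqrt (7 * C₁ + 1) ^ 2 = 7 * C₁ + 1 := Real.sq_sqrt (by linarith)
  have h2 : (2 * (C₀ + 1) * Real.sqrt (7 * C₁ + 1)) ^ 2 = 4 * (C₀ + 1) ^ 2 * (7 * C₁ + 1) := by
    rw [mul_pow, mul_pow, hs]; ring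
  rw [h2]
  have hkey : C₁ * (4 * δ ^ 2 + δ ^ 2 / 2 * L) + δ ^ 2 / 2 ≤ (7 * C₁ + 1) * (δ ^ 2 * L) := by
    nlinarith [mul_nonneg (mul_nonneg h1 (sq_nonneg δ)) (by linarith : (0:ℝ) ≤ L - 0.69),
      mul_nonneg (sq_nonneg δ) (by linarith : (0:ℝ) ≤ L - 0.69)]
  have hC : 4 * C₀ ^ 2 ≤ 4 * (C₀ + 1) ^ 2 := by nlinarith
  have hnn : 0 ≤ C₁ * (4 * δ ^ 2 + δ ^ 2 / 2 * L) + δ ^ 2 / 2 := by positivity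
  calc 4 * C₀ ^ 2 * (C₁ * (4 * δ ^ 2 + δ ^ 2 / 2 * L) + δ ^ 2 / 2)
      ≤ 4 * (C₀ + 1) ^ 2 * ((7 * C₁ + 1) * (δ ^ 2 * L)) := by
        apply mul_le_mul hC hkey hnn (by positivity)
    _ = 4 * (C₀ + 1) ^ 2 * (7 * C₁ + 1) * (δ ^ 2 * L) := by ring

/-- Lemma 6.1, inequality (24): if `Q` has density `g` with respect to `λ × ν` on
`[0,∞)²`, `0 ≤ z ≤ c₀` `Q`-a.e., and the marginal density `ḡ(y) = ∫ g(y,z) ν(dz)` is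
bounded by `c₁`, then there is a constant `Γ₃` such that for `0 < |s−t| < 1`,
`‖h_t − h_s‖_{L²(Q)} ≤ Γ₃ |t−s| √(log(2/|t−s|))`. -/
theorem hker_L2_modulus
    (ν : Measure ℝ) [SigmaFinite ν] (hν : ν (Iio 0) = 0)
    (g : ℝ → ℝ → ℝ) (hg_meas : Measurable (Function.uncurry g))
    (hg_nonneg : ∀ y z, 0 ≤ g y z)
    (Q : Measure (ℝ × ℝ)) [IsProbabilityMeasure Q]
    (hQ : Q = ((volume.restrict (Ici (0 : ℝ))).prod ν).withDensity
      (fun p => ENNReal.ofReal (g p.1 p.2)))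
    (c₀ : ℝ) (hzbd : ∀ᵐ p ∂Q, 0 ≤ p.2 ∧ p.2 ≤ c₀)
    (c₁ : ℝ) (hmarg : ∀ y : ℝ, (∫⁻ z, ENNReal.ofReal (g y z) ∂ν) ≤ ENNReal.ofReal c₁) :
    ∃ Γ₃ : ℝ, 0 < Γ₃ ∧ ∀ s t : ℝ, 0 ≤ s → 0 ≤ t → s ≠ t → |s - t| < 1 →
      eLpNorm (fun p : ℝ × ℝ => hker t p.1 p.2 - hker s p.1 p.2) 2 Q
        ≤ ENNReal.ofReal (Γ₃ * (|t - s| * Real.sqrt (Real.log (2 / |t - s|)))) := by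
  classical
  set C₀ : ℝ := max c₀ 0 with hC₀def
  set C₁ : ℝ := max c₁ 0 with hC₁def
  have hC₀ : 0 ≤ C₀ := le_max_right _ _
  have hC₁ : 0 ≤ C₁ := le_max_right _ _
  set Γ : ℝ := 2 * (C₀ + 1) * Real.sqrt (7 * C₁ + 1) with hΓdef
  have hΓpos : 0 < Γ := by
    have : 0 < Real.sqrt (7 * C₁ + 1) := Real.sqrt_pos.2 (by linarith)
    positivity
  have hgm : Measurable (fun p : ℝ × ℝ => ENNReal.ofReal (g p.1 p.2)) :=
    hg_meas.ennreal_ofReal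
  -- key case s < t
  have key : ∀ s t : ℝ, 0 ≤ s → s < t → t - s < 1 →
      eLpNorm (fun p : ℝ × ℝ => hker t p.1 p.2 - hker s p.1 p.2) 2 Q
        ≤ ENNReal.ofReal (Γ * ((t - s) * Real.sqrt (Real.log (2 / (t - s))))) := by
    intro s t hs hst h1
    set δ : ℝ := t - s with hδdef
    have hδ0 : 0 < δ := sub_pos.2 hst
    set L : ℝ := Real.log (2 / δ) with hLdef
    have hL69 : (0.69 : ℝ) ≤ L := by
      have h2 : Real.log 2 ≤ L := by
        apply (Real.log_le_log_iff (by norm_num) (by positivity)).2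
        rw [le_div_iff₀ hδ0]; nlinarith
      linarith [Real.log_two_gt_d9]
    have hL0 : 0 ≤ L := by linarith
    set φ : ℝ → ℝ := fun y => Real.sqrt (max (y - s) 0) - Real.sqrt (max (y - t) 0) with hφdef
    have hφmeas : Measurable φ := by
      apply Measurable.sub <;>
        exact (Real.continuous_sqrt.measurable).comp ((measurable_id.sub_const _).max measurable_const)
    have hφ0 : ∀ y, 0 ≤ φ y := by
      intro y
      apply sub_nonneg.2
      apply Real.sqrt_le_sqrt
      exact max_le_max (by linarith) le_rfl
    set F : ℝ → ℝ≥0∞ := fun y => ENNReal.ofReal (φ y ^ 2) with hFdef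
    have hFmeas : Measurable F := (hφmeas.pow_const 2).ennreal_ofReal
    set Gbar : ℝ → ℝ≥0∞ := fun y => ∫⁻ z, ENNReal.ofReal (g y z) ∂ν with hGdef
    -- rewrite the function
    have hfeq : (fun p : ℝ × ℝ => hker t p.1 p.2 - hker s p.1 p.2)
        = fun p : ℝ × ℝ => 2 * p.2 * φ p.1 := by
      funext p; simp only [hker, hφdef]; ring
    rw [hfeq]
    have hB : 0 ≤ Γ * (δ * Real.sqrt L) := by positivity
    -- main integral bound
    have hmain : ∫⁻ p, (‖2 * p.2 * φ p.1‖₊ : ℝ≥0∞) ^ (2:ℝ) ∂Q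
        ≤ ENNReal.ofReal ((Γ * (δ * Real.sqrt L)) ^ 2) := by
      have hae : ∀ᵐ p ∂Q, (‖2 * p.2 * φ p.1‖₊ : ℝ≥0∞) ^ (2:ℝ)
          ≤ ENNReal.ofReal (4 * C₀ ^ 2) * F p.1 := by
        filter_upwards [hzbd] with p hp
        obtain ⟨hz0, hzc⟩ := hp
        have hzC : p.2 ≤ C₀ := hzc.trans (le_max_left _ _)
        rw [← enorm_eq_nnnorm, Real.enorm_eq_ofReal_abs, ENNReal.ofReal_rpow_of_nonneg (abs_nonneg _) (by norm_num),
          ← ENNReal.ofReal_mul (by positivity)]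
        apply ENNReal.ofReal_le_ofReal
        have habs : |2 * p.2 * φ p.1| ^ (2:ℝ) = (2 * p.2 * φ p.1) ^ 2 := by
          rw [show (2:ℝ) = ((2:ℕ):ℝ) by norm_num, Real.rpow_natCast, sq_abs]
        rw [habs]
        nlinarith [mul_le_mul_of_nonneg_right (mul_le_mul hzC hzC hz0 hC₀) (sq_nonneg (φ p.1))]
      -- transfer via density
      have hQF : ∫⁻ p, F p.1 ∂Q = ∫⁻ y in Ici (0:ℝ), F y * Gbar y ∂volume := by
        have e1 : ∫⁻ p, F p.1 ∂Q
            = ∫⁻ p, ENNReal.ofReal (g p.1 p.2) * F p.1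
                ∂((volume.restrict (Ici (0:ℝ))).prod ν) := by
          rw [hQ]
          exact lintegral_withDensity_eq_lintegral_mul _ hgm (hFmeas.comp measurable_fst)
        have e2 : ∫⁻ p, ENNReal.ofReal (g p.1 p.2) * F p.1
              ∂((volume.restrict (Ici (0:ℝ))).prod ν)
            = ∫⁻ y in Ici (0:ℝ), ∫⁻ z, ENNReal.ofReal (g y z) * F y ∂ν ∂volume :=
          lintegral_prod _ ((hgm.mul (hFmeas.comp measurable_fst)).aemeasurable)
        rw [e1, e2]
        refine lintegral_congr fun y => ?_
        rw [lintegral_mul_const' (F y) _ ENNReal.ofReal_ne_top, mul_comm]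
      have hone : ∫⁻ y in Ici (0:ℝ), Gbar y ∂volume = 1 := by
        have h0 : Q Set.univ = 1 := measure_univ
        rw [hQ, withDensity_apply _ MeasurableSet.univ, Measure.restrict_univ,
          lintegral_prod _ hgm.aemeasurable] at h0
        exact h0
      -- pointwise split
      have hsplit : ∀ y, F y * Gbar y
          ≤ (Iio (t+1)).indicator (fun y => ENNReal.ofReal C₁ * F y) y
            + ENNReal.ofReal (δ ^ 2 / 2) * Gbar y := by
        intro y
        by_cases hy : y < t + 1
        · rw [indicator_of_mem (mem_Iio.2 hy)]
          refine le_trans ?_ le_self_add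
          rw [mul_comm]
          exact mul_le_mul_left
            ((hmarg y).trans (ENNReal.ofReal_le_ofReal (le_max_left _ _))) _
        · rw [indicator_of_notMem (fun hmem => hy (mem_Iio.1 hmem)), zero_add]
          push_neg at hy
          apply mul_le_mul_left
          apply ENNReal.ofReal_le_ofReal
          have hy2 : t + δ ≤ y := by linarith
          have htail := phi_sq_le_tail hst (by linarith : t + (t - s) ≤ y)
          have : φ y ^ 2 ≤ δ ^ 2 / (2 * (y - s)) := htail
          refine this.trans ?_
          apply div_le_div_of_nonneg_left (sq_nonneg _) (by norm_num)
          linarith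
      -- main part
      have hmain2 : ∫⁻ y in Iio (t+1) ∩ Ici (0:ℝ), F y ∂volume
          ≤ ENNReal.ofReal (4 * δ ^ 2 + δ ^ 2 / 2 * L) := by
        have hzero : ∀ y, F y = (Ici s).indicator F y := by
          intro y
          by_cases hy : s ≤ y
          · rw [indicator_of_mem (mem_Ici.2 hy)]
          · rw [indicator_of_notMem (fun hmem => hy (mem_Ici.1 hmem))]
            push_neg at hy
            have h1' : max (y - s) 0 = 0 := max_eq_right (by linarith)
            have h2' : max (y - t) 0 = 0 := max_eq_right (by linarith)
            simp [hFdef, hφdef, h1', h2']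
        have piece1 : ∫⁻ y in Ico s (t + δ), F y ∂volume ≤ ENNReal.ofReal (4 * δ ^ 2) := by
          calc ∫⁻ y in Ico s (t + δ), F y ∂volume
              ≤ ∫⁻ _ in Ico s (t + δ), ENNReal.ofReal (2 * δ) ∂volume := by
                apply setLIntegral_mono measurable_const
                intro y hy
                apply ENNReal.ofReal_le_ofReal
                have h1' : φ y ≤ Real.sqrt (max (y - s) 0) := by
                  have := Real.sqrt_nonneg (max (y - t) 0)
                  simp only [hφdef]; linarith
                have h2' : φ y ^ 2 ≤ max (y - s) 0 := by
                  have h3' := pow_le_pow_left₀ (hφ0 y) h1' 2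
                  rwa [Real.sq_sqrt (le_max_right _ _)] at h3'
                have h4' : max (y - s) 0 ≤ 2 * δ := by
                  apply max_le _ (by positivity)
                  have := hy.2
                  simp only [Set.mem_Ico] at hy
                  linarith [hy.2]
                linarith
            _ = ENNReal.ofReal (2 * δ) * volume (Ico s (t + δ)) := setLIntegral_const _ _
            _ = ENNReal.ofReal (2 * δ) * ENNReal.ofReal (2 * δ) := by
                rw [Real.volume_Ico]
                congr 1
                rw [hδdef]; congr 1; ring
            _ = ENNReal.ofReal (4 * δ ^ 2) := by
                rw [← ENNReal.ofReal_mul (by positivity)]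
                congr 1
                ring
        have piece2 : ∫⁻ y in Icc (t + δ) (t + 1), F y ∂volume
            ≤ ENNReal.ofReal (δ ^ 2 / 2 * L) := by
          have hsub : ∀ y ∈ Icc (t + δ) (t + 1), φ y ^ 2 ≤ δ ^ 2 / 2 * (y - s)⁻¹ := by
            intro y hy
            have hys : 0 < y - s := by
              have := hy.1; linarith
            have htail := phi_sq_le_tail hst (by linarith [hy.1] : t + (t - s) ≤ y)
            have heq : δ ^ 2 / (2 * (y - s)) = δ ^ 2 / 2 * (y - s)⁻¹ := by
              field_simp
            calc φ y ^ 2 ≤ δ ^ 2 / (2 * (y - s)) := htail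
              _ = δ ^ 2 / 2 * (y - s)⁻¹ := heq
          have hintble : IntegrableOn (fun y => δ ^ 2 / 2 * (y - s)⁻¹)
              (Icc (t + δ) (t + 1)) volume := by
            apply ContinuousOn.integrableOn_Icc
            apply ContinuousOn.mul continuousOn_const
            apply ContinuousOn.inv₀ ((continuous_id.sub continuous_const).continuousOn)
            intro y hy
            have h1' := hy.1
            intro h0'
            have h2' : y = s := sub_eq_zero.1 h0'
            simp only [hδdef] at h1'
            linarith
          have hnn : 0 ≤ᵐ[volume.restrict (Icc (t + δ) (t + 1))]
              fun y => δ ^ 2 / 2 * (y - s)⁻¹ := by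
            filter_upwards [ae_restrict_mem measurableSet_Icc] with y hy
            have : 0 < y - s := by linarith [hy.1]
            positivity
          have hcalc : ∫ y in Icc (t + δ) (t + 1), δ ^ 2 / 2 * (y - s)⁻¹ ∂volume
              ≤ δ ^ 2 / 2 * L := by
            rw [integral_Icc_eq_integral_Ioc,
              ← intervalIntegral.integral_of_le (by linarith : t + δ ≤ t + 1),
              intervalIntegral.integral_const_mul]
            have hint : ∫ y in (t + δ)..(t + 1), (y - s)⁻¹
                = Real.log ((t + 1 - s) / (t + δ - s)) := by
              rw [intervalIntegral.integral_comp_sub_right (fun x => x⁻¹) s]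
              exact integral_inv_of_pos (by linarith) (by linarith)
            rw [hint]
            apply mul_le_mul_of_nonneg_left _ (by positivity)
            apply (Real.log_le_log_iff (div_pos (by linarith) (by linarith)) (div_pos (by norm_num) hδ0)).2
            rw [div_le_div_iff₀ (by linarith) hδ0]
            nlinarith
          calc ∫⁻ y in Icc (t + δ) (t + 1), F y ∂volume
              ≤ ∫⁻ y in Icc (t + δ) (t + 1), ENNReal.ofReal (δ ^ 2 / 2 * (y - s)⁻¹) ∂volume := by
                apply setLIntegral_mono
                  ((((measurable_id.sub_const s).inv).const_mul _).ennreal_ofReal)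
                exact fun y hy => ENNReal.ofReal_le_ofReal (hsub y hy)
            _ = ENNReal.ofReal (∫ y in Icc (t + δ) (t + 1), δ ^ 2 / 2 * (y - s)⁻¹ ∂volume) :=
                (ofReal_integral_eq_lintegral_ofReal hintble hnn).symm
            _ ≤ ENNReal.ofReal (δ ^ 2 / 2 * L) := ENNReal.ofReal_le_ofReal hcalc
        calc ∫⁻ y in Iio (t+1) ∩ Ici (0:ℝ), F y ∂volume
            = ∫⁻ y in Iio (t+1) ∩ Ici (0:ℝ), (Ici s).indicator F y ∂volume :=
              lintegral_congr fun y => hzero y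
          _ = ∫⁻ y in Ici s ∩ (Iio (t+1) ∩ Ici (0:ℝ)), F y ∂volume := by
              rw [lintegral_indicator measurableSet_Ici,
                Measure.restrict_restrict measurableSet_Ici]
          _ ≤ ∫⁻ y in Icc s (t + 1), F y ∂volume := by
              apply lintegral_mono_set
              rintro y ⟨hy1, hy2, _⟩
              exact ⟨hy1, le_of_lt hy2⟩
          _ = ∫⁻ y in Ico s (t + δ) ∪ Icc (t + δ) (t + 1), F y ∂volume := by
              rw [Ico_union_Icc_eq_Icc (by linarith) (by linarith)]
          _ ≤ ∫⁻ y in Ico s (t + δ), F y ∂volume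
              + ∫⁻ y in Icc (t + δ) (t + 1), F y ∂volume := lintegral_union_le _ _ _
          _ ≤ ENNReal.ofReal (4 * δ ^ 2) + ENNReal.ofReal (δ ^ 2 / 2 * L) :=
              add_le_add piece1 piece2
          _ = ENNReal.ofReal (4 * δ ^ 2 + δ ^ 2 / 2 * L) :=
              (ENNReal.ofReal_add (by positivity) (by positivity)).symm
      -- assemble
      have hIci : ∫⁻ y in Ici (0:ℝ), F y * Gbar y ∂volume
          ≤ ENNReal.ofReal C₁ * ENNReal.ofReal (4 * δ ^ 2 + δ ^ 2 / 2 * L)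
            + ENNReal.ofReal (δ ^ 2 / 2) := by
        calc ∫⁻ y in Ici (0:ℝ), F y * Gbar y ∂volume
            ≤ ∫⁻ y in Ici (0:ℝ), ((Iio (t+1)).indicator (fun y => ENNReal.ofReal C₁ * F y) y
                + ENNReal.ofReal (δ ^ 2 / 2) * Gbar y) ∂volume :=
              lintegral_mono fun y => hsplit y
          _ = ∫⁻ y in Ici (0:ℝ), (Iio (t+1)).indicator (fun y => ENNReal.ofReal C₁ * F y) y ∂volume
              + ∫⁻ y in Ici (0:ℝ), ENNReal.ofReal (δ ^ 2 / 2) * Gbar y ∂volume :=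
              lintegral_add_left ((hFmeas.const_mul _).indicator measurableSet_Iio) _
          _ = ENNReal.ofReal C₁ * ∫⁻ y in Iio (t+1) ∩ Ici (0:ℝ), F y ∂volume
              + ENNReal.ofReal (δ ^ 2 / 2) * ∫⁻ y in Ici (0:ℝ), Gbar y ∂volume := by
              rw [lintegral_indicator measurableSet_Iio,
                Measure.restrict_restrict measurableSet_Iio,
                lintegral_const_mul' _ _ ENNReal.ofReal_ne_top,
                lintegral_const_mul' _ _ ENNReal.ofReal_ne_top]
          _ ≤ ENNReal.ofReal C₁ * ENNReal.ofReal (4 * δ ^ 2 + δ ^ 2 / 2 * L)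
              + ENNReal.ofReal (δ ^ 2 / 2) := by
              rw [hone, mul_one]
              exact add_le_add (mul_le_mul_right hmain2 _) le_rfl
      calc ∫⁻ p, (‖2 * p.2 * φ p.1‖₊ : ℝ≥0∞) ^ (2:ℝ) ∂Q
          ≤ ∫⁻ p, ENNReal.ofReal (4 * C₀ ^ 2) * F p.1 ∂Q := lintegral_mono_ae hae
        _ = ENNReal.ofReal (4 * C₀ ^ 2) * ∫⁻ p, F p.1 ∂Q :=
            lintegral_const_mul' _ _ ENNReal.ofReal_ne_top
        _ = ENNReal.ofReal (4 * C₀ ^ 2) * ∫⁻ y in Ici (0:ℝ), F y * Gbar y ∂volume := by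
            rw [hQF]
        _ ≤ ENNReal.ofReal (4 * C₀ ^ 2)
            * (ENNReal.ofReal C₁ * ENNReal.ofReal (4 * δ ^ 2 + δ ^ 2 / 2 * L)
              + ENNReal.ofReal (δ ^ 2 / 2)) := mul_le_mul_right hIci _
        _ = ENNReal.ofReal (4 * C₀ ^ 2 * (C₁ * (4 * δ ^ 2 + δ ^ 2 / 2 * L) + δ ^ 2 / 2)) := by
            rw [← ENNReal.ofReal_mul hC₁, ← ENNReal.ofReal_add (by positivity) (by positivity),
              ← ENNReal.ofReal_mul (by positivity)]
        _ ≤ ENNReal.ofReal ((Γ * (δ * Real.sqrt L)) ^ 2) := by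
            apply ENNReal.ofReal_le_ofReal
            have harith := arith_bound C₀ C₁ δ L hC₀ hC₁ hδ0.le hL69
            have hsqL : Real.sqrt L ^ 2 = L := Real.sq_sqrt hL0
            have heq2 : (Γ * (δ * Real.sqrt L)) ^ 2
                = (2 * (C₀ + 1) * Real.sqrt (7 * C₁ + 1)) ^ 2 * (δ ^ 2 * L) := by
              rw [hΓdef, show (2 * (C₀ + 1) * Real.sqrt (7 * C₁ + 1) * (δ * Real.sqrt L)) ^ 2
                = (2 * (C₀ + 1) * Real.sqrt (7 * C₁ + 1)) ^ 2 * (δ ^ 2 * Real.sqrt L ^ 2) by ring,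
                hsqL]
            rw [heq2]
            exact harith
    -- conclude
    rw [eLpNorm_eq_lintegral_rpow_enorm_toReal (by norm_num) (by norm_num)]
    have htoReal : ((2 : ℝ≥0∞).toReal) = (2:ℝ) := by norm_num
    rw [htoReal]
    calc (∫⁻ p, (‖2 * p.2 * φ p.1‖₊ : ℝ≥0∞) ^ (2:ℝ) ∂Q) ^ (1/(2:ℝ))
        ≤ (ENNReal.ofReal ((Γ * (δ * Real.sqrt L)) ^ 2)) ^ (1/(2:ℝ)) :=
          ENNReal.rpow_le_rpow hmain (by norm_num)
      _ = ENNReal.ofReal (Γ * (δ * Real.sqrt L)) := by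
          rw [ENNReal.ofReal_pow hB, ← ENNReal.rpow_natCast, ← ENNReal.rpow_mul]
          norm_num
  refine ⟨Γ, hΓpos, ?_⟩
  intro s t hs ht hne habs
  rcases lt_or_gt_of_ne hne with h | h
  · have habs' : t - s < 1 := by
      rw [abs_sub_comm, abs_of_pos (sub_pos.2 h)] at habs
      exact habs
    have := key s t hs h habs'
    rwa [abs_of_pos (sub_pos.2 h)]
  · have habs' : s - t < 1 := by
      rw [abs_of_pos (sub_pos.2 h)] at habs
      exact habs
    have hk := key t s ht h habs'
    have hnegeq : (fun p : ℝ × ℝ => hker s p.1 p.2 - hker t p.1 p.2)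
        = -(fun p : ℝ × ℝ => hker t p.1 p.2 - hker s p.1 p.2) := by
      funext p; simp [neg_sub]
    rw [hnegeq, eLpNorm_neg] at hk
    rw [show |t - s| = s - t by rw [abs_sub_comm]; exact abs_of_pos (sub_pos.2 h)]
    exact hk
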